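/- In the auxiliary graph L(g, g_1, g_2), every set T of vertex-disjoint triangles covering {h_1^1, h_2^1, h_1^2, h_2^2, h_3^2, h_4^2} either covers all nine vertices of L or covers all vertices except g, g_1, g_2; moreover both alternatives are realized by some T. -/
import Mathlib


/-- `T` is a family of pairwise vertex-disjoint triangles of `G`. -/
def IsTriangleTiling {V : Type*} (G : SimpleGraph V) (T : Set (Finset V)) : Prop :=
  (∀ s ∈ T, s.card = 3 ∧ ∀ u ∈ s, ∀ v ∈ s, u ≠ v → G.Adj u v) ∧
  (∀ s ∈ T, ∀ s' ∈ T, s ≠ s' → ∀ v ∈ s, v ∉ s')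

/-- A family of triangles covers a vertex if some triangle of it contains that vertex. -/
def Covers {V : Type*} (T : Set (Finset V)) (v : V) : Prop :=
  ∃ s ∈ T, v ∈ s

/-- The auxiliary graph `L(g, g₁, g₂)`, with vertices labelled
`g = 0`, `g₁ = 1`, `g₂ = 2`, `h₁¹ = 3`, `h₂¹ = 4`, `h₁² = 5`, `h₂² = 6`, `h₃² = 7`,
`h₄² = 8` and the 14 edges of the splitter construction. -/
def gadgetL : SimpleGraph (Fin 9) :=
  SimpleGraph.fromRel fun x y =>
    (x = 0 ∧ y = 3) ∨ (x = 0 ∧ y = 4) ∨ (x = 3 ∧ y = 4) ∨ (x = 3 ∧ y = 5) ∨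
    (x = 3 ∧ y = 6) ∨ (x = 4 ∧ y = 7) ∨ (x = 4 ∧ y = 8) ∨ (x = 5 ∧ y = 6) ∨
    (x = 6 ∧ y = 7) ∨ (x = 7 ∧ y = 8) ∨ (x = 5 ∧ y = 1) ∨ (x = 6 ∧ y = 1) ∨
    (x = 7 ∧ y = 2) ∨ (x = 8 ∧ y = 2)

instance : DecidableRel gadgetL.Adj := fun a b =>
  decidable_of_iff' _ (SimpleGraph.fromRel_adj _ a b)

set_option maxRecDepth 10000 in
lemma tri_class : ∀ s : Finset (Fin 9), s.card = 3 →
    (∀ u ∈ s, ∀ v ∈ s, u ≠ v → gadgetL.Adj u v) →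
    s = {0, 3, 4} ∨ s = {3, 5, 6} ∨ s = {4, 7, 8} ∨ s = {1, 5, 6} ∨ s = {2, 7, 8} := by
  decide

/-- In `L(g, g₁, g₂)`, every family `T` of vertex-disjoint triangles
covering `{h₁¹, h₂¹, h₁², h₂², h₃², h₄²}` either covers all nine vertices of `L` or covers
exactly the vertices other than `g, g₁, g₂`; moreover both alternatives are realized. -/
theorem gadgetL_tilings :
    (∀ T : Set (Finset (Fin 9)), IsTriangleTiling gadgetL T →
        (∀ v : Fin 9, v ∉ ({0, 1, 2} : Set (Fin 9)) → Covers T v) →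
        ((∀ v : Fin 9, Covers T v) ∨
          (∀ v : Fin 9, Covers T v ↔ v ∉ ({0, 1, 2} : Set (Fin 9))))) ∧
      (∃ T : Set (Finset (Fin 9)), IsTriangleTiling gadgetL T ∧
        ∀ v : Fin 9, Covers T v) ∧
      (∃ T : Set (Finset (Fin 9)), IsTriangleTiling gadgetL T ∧
        ∀ v : Fin 9, (Covers T v ↔ v ∉ ({0, 1, 2} : Set (Fin 9)))) := by
  refine ⟨?_, ?_, ?_⟩
  · intro T ⟨htri, hdisj⟩ hcov
    -- classify a triangle of T containing a given vertex
    have key : ∀ s ∈ T, s = {0, 3, 4} ∨ s = {3, 5, 6} ∨ s = {4, 7, 8} ∨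
        s = {1, 5, 6} ∨ s = {2, 7, 8} := fun s hs =>
      tri_class s (htri s hs).1 (htri s hs).2
    obtain ⟨s3, hs3T, hs3⟩ := hcov 3 (by simp)
    obtain ⟨s4, hs4T, hs4⟩ := hcov 4 (by simp)
    obtain ⟨s5, hs5T, hs5⟩ := hcov 5 (by simp)
    obtain ⟨s7, hs7T, hs7⟩ := hcov 7 (by simp)
    by_cases h034 : ({0, 3, 4} : Finset (Fin 9)) ∈ T
    · left
      -- triangle containing 5 must be {1,5,6}
      have h156 : ({1, 5, 6} : Finset (Fin 9)) ∈ T := by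
        rcases key s5 hs5T with h | h | h | h | h <;> subst h
        · exact absurd hs5 (by decide)
        · exact absurd (show (3:Fin 9) ∈ ({3,5,6}:Finset (Fin 9)) by decide)
            (hdisj _ h034 _ hs5T (by decide) 3 (by decide))
        · exact absurd hs5 (by decide)
        · exact hs5T
        · exact absurd hs5 (by decide)
      have h278 : ({2, 7, 8} : Finset (Fin 9)) ∈ T := by
        rcases key s7 hs7T with h | h | h | h | h <;> subst h
        · exact absurd hs7 (by decide)
        · exact absurd hs7 (by decide)
        · exact absurd (show (4:Fin 9) ∈ ({4,7,8}:Finset (Fin 9)) by decide)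
            (hdisj _ h034 _ hs7T (by decide) 4 (by decide))
        · exact absurd hs7 (by decide)
        · exact hs7T
      intro v
      fin_cases v
      · exact ⟨_, h034, by decide⟩
      · exact ⟨_, h156, by decide⟩
      · exact ⟨_, h278, by decide⟩
      · exact ⟨_, h034, by decide⟩
      · exact ⟨_, h034, by decide⟩
      · exact ⟨_, h156, by decide⟩
      · exact ⟨_, h156, by decide⟩
      · exact ⟨_, h278, by decide⟩
      · exact ⟨_, h278, by decide⟩
    · right
      have h356 : ({3, 5, 6} : Finset (Fin 9)) ∈ T := by
        rcases key s3 hs3T with h | h | h | h | h <;> subst h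
        · exact absurd hs3T h034
        · exact hs3T
        · exact absurd hs3 (by decide)
        · exact absurd hs3 (by decide)
        · exact absurd hs3 (by decide)
      have h478 : ({4, 7, 8} : Finset (Fin 9)) ∈ T := by
        rcases key s4 hs4T with h | h | h | h | h <;> subst h
        · exact absurd hs4T h034
        · exact absurd hs4 (by decide)
        · exact hs4T
        · exact absurd hs4 (by decide)
        · exact absurd hs4 (by decide)
      intro v
      constructor
      · rintro ⟨s, hsT, hvs⟩ hv
        simp only [Set.mem_insert_iff, Set.mem_singleton_iff] at hv
        rcases key s hsT with h | h | h | h | h <;> subst h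
        · exact absurd hsT h034
        · rcases hv with h | h | h <;> subst h <;> revert hvs <;> decide
        · rcases hv with h | h | h <;> subst h <;> revert hvs <;> decide
        · exact absurd (show (5:Fin 9) ∈ ({3,5,6}:Finset (Fin 9)) by decide)
            (hdisj _ hsT _ h356 (by decide) 5 (by decide))
        · exact absurd (show (7:Fin 9) ∈ ({4,7,8}:Finset (Fin 9)) by decide)
            (hdisj _ hsT _ h478 (by decide) 7 (by decide))
      · intro hv
        fin_cases v
        · exact absurd (by simp) hv
        · exact absurd (by simp) hv
        · exact absurd (by simp) hv
        · exact ⟨_, h356, by decide⟩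
        · exact ⟨_, h478, by decide⟩
        · exact ⟨_, h356, by decide⟩
        · exact ⟨_, h356, by decide⟩
        · exact ⟨_, h478, by decide⟩
        · exact ⟨_, h478, by decide⟩
  · refine ⟨{({0,3,4} : Finset (Fin 9)), {1,5,6}, {2,7,8}}, ⟨?_, ?_⟩, ?_⟩
    · intro s hs
      simp only [Set.mem_insert_iff, Set.mem_singleton_iff] at hs
      rcases hs with h | h | h <;> subst h <;> exact ⟨by decide, by decide⟩
    · intro s hs s' hs' hne
      simp only [Set.mem_insert_iff, Set.mem_singleton_iff] at hs hs'
      rcases hs with h | h | h <;> rcases hs' with h' | h' | h' <;> subst h <;> subst h' <;>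
        first | exact absurd rfl hne | decide
    · intro v
      fin_cases v
      · exact ⟨{0,3,4}, by simp, by decide⟩
      · exact ⟨{1,5,6}, by simp, by decide⟩
      · exact ⟨{2,7,8}, by simp, by decide⟩
      · exact ⟨{0,3,4}, by simp, by decide⟩
      · exact ⟨{0,3,4}, by simp, by decide⟩
      · exact ⟨{1,5,6}, by simp, by decide⟩
      · exact ⟨{1,5,6}, by simp, by decide⟩
      · exact ⟨{2,7,8}, by simp, by decide⟩
      · exact ⟨{2,7,8}, by simp, by decide⟩
  · refine ⟨{({3,5,6} : Finset (Fin 9)), {4,7,8}}, ⟨?_, ?_⟩, ?_⟩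
    · intro s hs
      simp only [Set.mem_insert_iff, Set.mem_singleton_iff] at hs
      rcases hs with h | h <;> subst h <;> exact ⟨by decide, by decide⟩
    · intro s hs s' hs' hne
      simp only [Set.mem_insert_iff, Set.mem_singleton_iff] at hs hs'
      rcases hs with h | h <;> rcases hs' with h' | h' <;> subst h <;> subst h' <;>
        first | exact absurd rfl hne | decide
    · intro v
      have hm : ∀ s ∈ ({({3,5,6} : Finset (Fin 9)), {4,7,8}} : Set (Finset (Fin 9))),
          s = {3,5,6} ∨ s = {4,7,8} := by
        intro s hs
        simpa using hs
      constructor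
      · rintro ⟨s, hsT, hvs⟩ hv
        simp only [Set.mem_insert_iff, Set.mem_singleton_iff] at hv
        rcases hm s hsT with h | h <;> subst h <;>
          rcases hv with h | h | h <;> subst h <;> revert hvs <;> decide
      · intro hv
        fin_cases v
        · exact absurd (by simp) hv
        · exact absurd (by simp) hv
        · exact absurd (by simp) hv
        · exact ⟨{3,5,6}, by simp, by decide⟩
        · exact ⟨{4,7,8}, by simp, by decide⟩
        · exact ⟨{3,5,6}, by simp, by decide⟩
        · exact ⟨{3,5,6}, by simp, by decide⟩
        · exact ⟨{4,7,8}, by simp, by decide⟩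
        · exact ⟨{4,7,8}, by simp, by decide⟩
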